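/- arXiv:2402.05754 — 2 statements merged into one kernel-verified Lean document; each statement's English description precedes it below -/
import Mathlib

section
/- For every symplectic F-linear bijection A : V → V there is a unique vector b_A ∈ V such that ϑ_0(A^{-1} u) = ϑ_{b_A}(u) for all u ∈ V, and then ϑ_a(A^{-1} u) = ϑ_{A a + b_A}(u) for all a, u ∈ V. The map sending A to the affine bijection σ_A : a ↦ A a + b_A of V is an injective group homomorphism from the symplectic group into the permutation group of V; its image meets the group of translations of V only in the identity, and the image has exactly two orbits on V, namely {a ∈ V : Tr(ϑ_0(a)) = 0} and {a ∈ V : Tr(ϑ_0(a)) = 1}, of sizes (q^{2m}+q^m)/2 and (q^{2m}−q^m)/2. (This gives a complement to the translation subgroup in the affine symplectic group ASp(2m,q) distinct from the linear one, with the stated orbit lengths.) -/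
open Finset

noncomputable section

/-- The symplectic bilinear form `⟨u,v⟩ = ∑_{i<m} (u_i v_{m+i} + u_{m+i} v_i)` on `F^{2m}`,
`F = GF(2^h)`. -/
def symp (h m : ℕ) (u v : Fin (2*m) → GaloisField 2 h) : GaloisField 2 h :=
  ∑ i : Fin m, (u ⟨i.1, by omega⟩ * v ⟨m + i.1, by omega⟩ +
    u ⟨m + i.1, by omega⟩ * v ⟨i.1, by omega⟩)

/-- The quadratic form `ϑ_0(u) = ∑_{i<m} u_i u_{m+i}`. -/
def th0 (h m : ℕ) (u : Fin (2*m) → GaloisField 2 h) : GaloisField 2 h :=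
  ∑ i : Fin m, u ⟨i.1, by omega⟩ * u ⟨m + i.1, by omega⟩

/-- The quadratic form `ϑ_a(u) = ϑ_0(u) + ⟨a,u⟩²`. -/
def th (h m : ℕ) (a u : Fin (2*m) → GaloisField 2 h) : GaloisField 2 h :=
  th0 h m u + (symp h m a u)^2

/-- The absolute trace `GF(2^h) → F_2`. -/
def tr (h : ℕ) (x : GaloisField 2 h) : ZMod 2 :=
  Algebra.trace (ZMod 2) (GaloisField 2 h) x

end

/-- `A` is a symplectic linear bijection. -/
def IsSymp (h m : ℕ)
    (A : (Fin (2*m) → GaloisField 2 h) ≃ₗ[GaloisField 2 h] (Fin (2*m) → GaloisField 2 h)) :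
    Prop :=
  ∀ u v, symp h m (A u) (A v) = symp h m u v

section Aux
variable {h m : ℕ}
local notation "F" => GaloisField 2 h
local notation "V" => (Fin (2*m) → GaloisField 2 h)

instance : CharP (GaloisField 2 h) 2 := inferInstance

lemma Ftwo (x : F) : x + x = 0 := by
  have : (2 : F) = 0 := by exact_mod_cast CharP.cast_eq_zero F 2
  calc x + x = 2 * x := by ring
  _ = 0 := by rw [this, zero_mul]

lemma Fsq (x y : F) : (x + y)^2 = x^2 + y^2 := by
  have : (2 : F) = 0 := by exact_mod_cast CharP.cast_eq_zero F 2
  ring_nf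
  rw [show x*y*2 = 2*(x*y) by ring, this]
  ring

lemma symp_comm (u v : V) : symp h m u v = symp h m v u := by
  unfold symp; exact Finset.sum_congr rfl (by intros; ring)

lemma symp_self (u : V) : symp h m u u = 0 := by
  unfold symp
  rw [Finset.sum_congr rfl (g := fun _ => (0:F)) (by intro i _; rw [mul_comm]; exact Ftwo _)]
  simp

lemma symp_add_left (u u' v : V) :
    symp h m (u + u') v = symp h m u v + symp h m u' v := by
  unfold symp; rw [← Finset.sum_add_distrib]
  exact Finset.sum_congr rfl (by intro i _; simp only [Pi.add_apply]; ring)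

lemma symp_smul_left (c : F) (u v : V) : symp h m (c • u) v = c * symp h m u v := by
  unfold symp; rw [Finset.mul_sum]
  exact Finset.sum_congr rfl (by intro i _; simp only [Pi.smul_apply, smul_eq_mul]; ring)

lemma symp_add_right (u v v' : V) :
    symp h m u (v + v') = symp h m u v + symp h m u v' := by
  rw [symp_comm, symp_add_left, symp_comm v u, symp_comm v' u]

lemma symp_smul_right (c : F) (u v : V) : symp h m u (c • v) = c * symp h m u v := by
  rw [symp_comm, symp_smul_left, symp_comm]

lemma th0_add (u v : V) : th0 h m (u + v) = th0 h m u + th0 h m v + symp h m u v := by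
  unfold th0 symp
  rw [← Finset.sum_add_distrib, ← Finset.sum_add_distrib]
  exact Finset.sum_congr rfl (by intro i _; simp only [Pi.add_apply]; ring)

lemma th0_smul (c : F) (u : V) : th0 h m (c • u) = c^2 * th0 h m u := by
  unfold th0; rw [Finset.mul_sum]
  exact Finset.sum_congr rfl (by intro i _; simp only [Pi.smul_apply, smul_eq_mul]; ring)

/-- the partner index -/
def pr (m : ℕ) (k : Fin (2*m)) : Fin (2*m) :=
  if hk : k.1 < m then ⟨m + k.1, by omega⟩ else ⟨k.1 - m, by omega⟩

lemma pr_pr (k : Fin (2*m)) : pr m (pr m k) = k := by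
  have := k.2
  unfold pr
  rcases Nat.lt_or_ge k.1 m with hk | hk
  · rw [dif_pos hk]; simp only [dif_neg (by omega : ¬ m + k.1 < m)]
    exact Fin.ext (by simp)
  · rw [dif_neg (by omega : ¬ k.1 < m)]
    simp only [dif_pos (by omega : k.1 - m < m)]
    exact Fin.ext (by simp; omega)

lemma symp_single (b : V) (k : Fin (2*m)) :
    symp h m b (Pi.single k (1:F)) = b (pr m k) := by
  have hk2 := k.2
  unfold symp pr
  rcases Nat.lt_or_ge k.1 m with hk | hk
  · rw [Finset.sum_eq_single (⟨k.1, hk⟩ : Fin m)]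
    · have h1 : (⟨m + k.1, by omega⟩ : Fin (2*m)) ≠ k := by
        simp [Fin.ext_iff]; omega
      have h2 : (⟨k.1, by omega⟩ : Fin (2*m)) = k := Fin.ext rfl
      rw [Pi.single_eq_of_ne h1, h2, Pi.single_eq_same, dif_pos hk]
      ring
    · intro i _ hi
      have hik : i.1 ≠ k.1 := fun e => hi (Fin.ext e)
      have h1 : (⟨m + i.1, by omega⟩ : Fin (2*m)) ≠ k := by
        simp [Fin.ext_iff]; omega
      have h2 : (⟨i.1, by omega⟩ : Fin (2*m)) ≠ k := by
        simp [Fin.ext_iff]; exact hik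
      rw [Pi.single_eq_of_ne h1, Pi.single_eq_of_ne h2, mul_zero, mul_zero, add_zero]
    · intro hmem; exact absurd (Finset.mem_univ _) hmem
  · rw [Finset.sum_eq_single (⟨k.1 - m, by omega⟩ : Fin m)]
    · have h1 : (⟨m + (k.1 - m), by omega⟩ : Fin (2*m)) = k := Fin.ext (by simp; omega)
      have h2 : (⟨k.1 - m, by omega⟩ : Fin (2*m)) ≠ k := by
        simp [Fin.ext_iff]; omega
      rw [Pi.single_eq_of_ne h2, h1, Pi.single_eq_same, dif_neg (by omega : ¬ k.1 < m)]
      ring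
    · intro i _ hi
      have hik : i.1 ≠ k.1 - m := fun e => hi (Fin.ext e)
      have h1 : (⟨m + i.1, by omega⟩ : Fin (2*m)) ≠ k := by
        simp [Fin.ext_iff]; omega
      have h2 : (⟨i.1, by omega⟩ : Fin (2*m)) ≠ k := by
        simp [Fin.ext_iff]; omega
      rw [Pi.single_eq_of_ne h1, Pi.single_eq_of_ne h2, mul_zero, mul_zero, add_zero]
    · intro hmem; exact absurd (Finset.mem_univ _) hmem

lemma symp_nondeg (b : V) (hb : ∀ u, symp h m b u = 0) : b = 0 := by
  funext j
  have := hb (Pi.single (pr m j) 1)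
  rwa [symp_single, pr_pr] at this


end Aux

section Aux2
variable {h m : ℕ}
local notation "F" => GaloisField 2 h
local notation "V" => (Fin (2*m) → GaloisField 2 h)

lemma sq_inj {x y : F} (hxy : x^2 = y^2) : x = y := by
  have h0 : (x + y)^2 = 0 := by rw [CharTwo.add_sq, hxy, CharTwo.add_self_eq_zero]
  have hxy0 : x + y = 0 := by
    exact pow_eq_zero_iff (n := 2) (by norm_num) |>.mp h0
  calc x = x + (y + y) := by rw [CharTwo.add_self_eq_zero, add_zero]
  _ = (x + y) + y := by ring
  _ = y := by rw [hxy0, zero_add]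

lemma addEqZeroIff {x y : F} : x + y = 0 ↔ x = y := by
  constructor
  · intro h0
    calc x = x + (y + y) := by rw [CharTwo.add_self_eq_zero, add_zero]
    _ = (x + y) + y := by ring
    _ = y := by rw [h0, zero_add]
  · rintro rfl; exact CharTwo.add_self_eq_zero x

lemma exists_sqrt (x : F) : ∃ y : F, y^2 = x := by
  have : Function.Surjective (fun y : F => y^2) :=
    Finite.surjective_of_injective (fun a b hab => sq_inj hab)
  exact this x

lemma funext_on_single {f g : (Fin (2*m) → GaloisField 2 h) → GaloisField 2 h}
    (hf : ∀ u v, f (u + v) = f u + f v) (hg : ∀ u v, g (u + v) = g u + g v)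
    (hs : ∀ (k : Fin (2*m)) (c : F), f (Pi.single k c) = g (Pi.single k c)) :
    ∀ u, f u = g u := by
  intro u
  let f' : (Fin (2*m) → GaloisField 2 h) →+ F := AddMonoidHom.mk' f hf
  let g' : (Fin (2*m) → GaloisField 2 h) →+ F := AddMonoidHom.mk' g hg
  have hu : u = ∑ k : Fin (2*m), Pi.single k (u k) := (Finset.univ_sum_single u).symm
  calc f u = f' (∑ k : Fin (2*m), Pi.single k (u k)) := by rw [← hu]; rfl
  _ = ∑ k : Fin (2*m), f (Pi.single k (u k)) := by rw [map_sum]; rfl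
  _ = ∑ k : Fin (2*m), g (Pi.single k (u k)) := Finset.sum_congr rfl (fun k _ => hs k (u k))
  _ = g' (∑ k : Fin (2*m), Pi.single k (u k)) := by rw [map_sum]; rfl
  _ = g u := by rw [← hu]; rfl

lemma single_eq_smul (k : Fin (2*m)) (c : F) :
    Pi.single k c = c • (Pi.single k 1 : Fin (2*m) → GaloisField 2 h) := by
  funext j
  rcases eq_or_ne j k with rfl | hj
  · simp
  · simp [Pi.single_eq_of_ne hj]

lemma symp_single_smul (b : V) (k : Fin (2*m)) (c : F) :
    symp h m b (Pi.single k c) = c * b (pr m k) := by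
  rw [single_eq_smul, symp_smul_right, symp_single]

lemma exists_unique_rep (D : (Fin (2*m) → GaloisField 2 h) → GaloisField 2 h)
    (hadd : ∀ u v, D (u + v) = D u + D v)
    (hsm : ∀ (c : F) u, D (c • u) = c^2 * D u) :
    ∃! b : Fin (2*m) → GaloisField 2 h, ∀ u, (symp h m b u)^2 = D u := by
  have hch : ∀ j : Fin (2*m), ∃ y : F, y^2 = D (Pi.single (pr m j) 1) :=
    fun j => exists_sqrt _
  choose b hb using hch
  refine ⟨b, ?_, ?_⟩
  · apply funext_on_single (f := fun u => (symp h m b u)^2) (g := D)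
    · intro u v; rw [symp_add_right, CharTwo.add_sq]
    · exact hadd
    · intro k c
      rw [symp_single_smul, mul_pow, hb, pr_pr, single_eq_smul k c, hsm]
  · intro b' hb'
    have hbb : ∀ u, (symp h m b u)^2 = D u := by
      apply funext_on_single (f := fun u => (symp h m b u)^2) (g := D)
      · intro u v; rw [symp_add_right, CharTwo.add_sq]
      · exact hadd
      · intro k c
        rw [symp_single_smul, mul_pow, hb, pr_pr, single_eq_smul k c, hsm]
    have key : ∀ u, symp h m (b' + b) u = 0 := by
      intro u
      rw [symp_add_left, addEqZeroIff]
      exact sq_inj ((hb' u).trans (hbb u).symm)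
    have := symp_nondeg _ key
    funext j
    have := congrFun this j
    exact (addEqZeroIff.mp this)
end Aux2


section Aux3
variable {h m : ℕ}
local notation "F" => GaloisField 2 h
local notation "V" => (Fin (2*m) → GaloisField 2 h)

lemma eqAddIff {x y z : F} : x = y + z ↔ z = x + y := by
  rw [← addEqZeroIff, ← addEqZeroIff (x := z),
    show x + (y + z) = z + (x + y) from by ring]

lemma isSymp_symm {A : (Fin (2*m) → GaloisField 2 h) ≃ₗ[GaloisField 2 h] (Fin (2*m) → GaloisField 2 h)}
    (hA : IsSymp h m A) : IsSymp h m A.symm := by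
  intro u v
  have := hA (A.symm u) (A.symm v)
  rw [A.apply_symm_apply, A.apply_symm_apply] at this
  exact this.symm

lemma exists_unique_beta
    (A : (Fin (2*m) → GaloisField 2 h) ≃ₗ[GaloisField 2 h] (Fin (2*m) → GaloisField 2 h))
    (hA : IsSymp h m A) :
    ∃! b : Fin (2*m) → GaloisField 2 h, ∀ u, th0 h m (A.symm u) = th h m b u := by
  have hrep := exists_unique_rep (fun u => th0 h m (A.symm u) + th0 h m u)
    (by
      intro u v
      simp only [map_add]
      rw [th0_add u v, th0_add (A.symm u) (A.symm v), isSymp_symm hA u v]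
      linear_combination CharTwo.add_self_eq_zero (symp h m u v))
    (by
      intro c u
      simp only [map_smul]
      rw [th0_smul, th0_smul]; ring)
  obtain ⟨b, hb, hbu⟩ := hrep
  refine ⟨b, ?_, ?_⟩
  · intro u
    unfold th
    exact eqAddIff.mpr (hb u)
  · intro b' hb'
    exact hbu b' (fun u => eqAddIff.mp (hb' u))

open scoped Classical in
noncomputable def beta (h m : ℕ)
    (A : (Fin (2*m) → GaloisField 2 h) ≃ₗ[GaloisField 2 h] (Fin (2*m) → GaloisField 2 h)) :
    Fin (2*m) → GaloisField 2 h :=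
  if hA : IsSymp h m A then (exists_unique_beta A hA).choose else 0

lemma beta_def {h m : ℕ}
    {A : (Fin (2*m) → GaloisField 2 h) ≃ₗ[GaloisField 2 h] (Fin (2*m) → GaloisField 2 h)}
    (hA : IsSymp h m A) : beta h m A = (exists_unique_beta A hA).choose := by
  unfold beta
  classical
  exact dif_pos hA

lemma beta_spec
    {A : (Fin (2*m) → GaloisField 2 h) ≃ₗ[GaloisField 2 h] (Fin (2*m) → GaloisField 2 h)}
    (hA : IsSymp h m A) : ∀ u, th0 h m (A.symm u) = th h m (beta h m A) u := by
  rw [beta_def hA]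
  exact (exists_unique_beta A hA).choose_spec.1

lemma beta_unique
    {A : (Fin (2*m) → GaloisField 2 h) ≃ₗ[GaloisField 2 h] (Fin (2*m) → GaloisField 2 h)}
    (hA : IsSymp h m A) {b' : Fin (2*m) → GaloisField 2 h}
    (hb' : ∀ u, th0 h m (A.symm u) = th h m b' u) : b' = beta h m A := by
  rw [beta_def hA]
  exact (exists_unique_beta A hA).choose_spec.2 b' hb'

lemma symp_apply
    {A : (Fin (2*m) → GaloisField 2 h) ≃ₗ[GaloisField 2 h] (Fin (2*m) → GaloisField 2 h)}
    (hA : IsSymp h m A) (a u : Fin (2*m) → GaloisField 2 h) :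
    symp h m a (A.symm u) = symp h m (A a) u := by
  have := hA a (A.symm u)
  rw [A.apply_symm_apply] at this
  exact this.symm

lemma th_shift
    {A : (Fin (2*m) → GaloisField 2 h) ≃ₗ[GaloisField 2 h] (Fin (2*m) → GaloisField 2 h)}
    (hA : IsSymp h m A) (a u : Fin (2*m) → GaloisField 2 h) :
    th h m a (A.symm u) = th h m (A a + beta h m A) u := by
  unfold th
  rw [symp_apply hA]
  have h1 := beta_spec (m := m) hA u
  unfold th at h1
  rw [h1, symp_add_left, CharTwo.add_sq]
  ring

lemma isSymp_one : IsSymp h m 1 := fun u v => rfl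

lemma isSymp_mul
    {A B : (Fin (2*m) → GaloisField 2 h) ≃ₗ[GaloisField 2 h] (Fin (2*m) → GaloisField 2 h)}
    (hA : IsSymp h m A) (hB : IsSymp h m B) : IsSymp h m (A * B) := by
  intro u v
  have : ∀ w, (A * B) w = A (B w) := fun w => rfl
  rw [this, this, hA, hB]

lemma beta_one : beta h m 1 = 0 := by
  symm
  apply beta_unique isSymp_one
  intro u
  unfold th
  have : (1 : (Fin (2*m) → GaloisField 2 h) ≃ₗ[GaloisField 2 h] (Fin (2*m) → GaloisField 2 h)).symm u = u := rfl
  rw [this]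
  have : symp h m 0 u = 0 := by
    have := symp_smul_left (m := m) (0:F) 0 u
    simpa using this
  rw [this]
  ring

lemma beta_mul
    {A B : (Fin (2*m) → GaloisField 2 h) ≃ₗ[GaloisField 2 h] (Fin (2*m) → GaloisField 2 h)}
    (hA : IsSymp h m A) (hB : IsSymp h m B) :
    beta h m (A * B) = A (beta h m B) + beta h m A := by
  symm
  apply beta_unique (isSymp_mul hA hB)
  intro u
  have hsm : (A * B).symm u = B.symm (A.symm u) := rfl
  rw [hsm, beta_spec hB (A.symm u), th_shift hA]

end Aux3


section Aux4
variable {h m : ℕ}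
local notation "F" => GaloisField 2 h
local notation "V" => (Fin (2*m) → GaloisField 2 h)

lemma tr_add (x y : F) : tr h (x + y) = tr h x + tr h y := by
  unfold tr; exact map_add _ x y

lemma zmod2_add_self (x : ZMod 2) : x + x = 0 := by revert x; decide

lemma zmod2_cases (x : ZMod 2) : x = 0 ∨ x = 1 := by revert x; decide

noncomputable def frobAlg (h : ℕ) : GaloisField 2 h ≃ₐ[ZMod 2] GaloisField 2 h :=
  AlgEquiv.ofRingEquiv (f := frobeniusEquiv (GaloisField 2 h) 2)
    (fun c => by
      rw [frobeniusEquiv_def, ← map_pow]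
      congr 1
      revert c; decide)

lemma tr_sq (x : F) : tr h (x^2) = tr h x := by
  have := Algebra.trace_eq_of_algEquiv (frobAlg h) x
  unfold tr
  rw [← this]
  rfl

lemma tr_surj : Function.Surjective (tr h) := by
  unfold tr
  exact Algebra.trace_surjective (ZMod 2) (GaloisField 2 h)

/-- fibers of a surjective hom onto ZMod 2 have half size -/
lemma half_card {G : Type*} [AddCommGroup G] [Finite G] (φ : G →+ ZMod 2)
    (hφ : Function.Surjective φ) :
    2 * Nat.card {y : G // φ y = 0} = Nat.card G := by
  have h1 : Nat.card G = Nat.card (G ⧸ φ.ker) * Nat.card φ.ker :=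
    AddSubgroup.card_eq_card_quotient_mul_card_addSubgroup φ.ker
  have h2 : Nat.card (G ⧸ φ.ker) = 2 := by
    rw [Nat.card_congr (QuotientAddGroup.quotientKerEquivOfSurjective φ hφ).toEquiv]
    simp [Nat.card_eq_fintype_card]
  have h3 : Nat.card {y : G // φ y = 0} = Nat.card φ.ker := by
    apply Nat.card_congr
    exact Equiv.subtypeEquiv (Equiv.refl G) (fun y => by
      simp [AddMonoidHom.mem_ker])
  rw [h3, h1, h2]

lemma artin_schreier {α : F} (hα : tr h α = 0) : ∃ s : F, s^2 + s = α := by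
  classical
  set P : F →+ F := AddMonoidHom.mk' (fun x => x^2 + x)
    (fun x y => by show (x+y)^2+(x+y) = (x^2+x)+(y^2+y); rw [CharTwo.add_sq]; ring) with hP
  set T : F →+ ZMod 2 := AddMonoidHom.mk' (tr h) tr_add with hT
  have hTsurj : Function.Surjective T := tr_surj
  have hrange : (P.range : Set F) ⊆ (T.ker : Set F) := by
    rintro x ⟨y, rfl⟩
    simp only [SetLike.mem_coe, AddMonoidHom.mem_ker]
    show tr h (y^2 + y) = 0
    rw [tr_add, tr_sq, zmod2_add_self]
  have hkerP : Nat.card P.ker = 2 := by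
    rw [Nat.card_eq_two_iff]
    refine ⟨⟨0, by simp [AddMonoidHom.mem_ker, hP]⟩,
      ⟨1, by simp [AddMonoidHom.mem_ker, hP]; exact CharTwo.add_self_eq_zero 1⟩,
      by simp [Subtype.ext_iff], ?_⟩
    ext ⟨s, hs⟩
    simp only [Set.mem_insert_iff, Set.mem_singleton_iff, Set.mem_univ, iff_true]
    have hs' : s^2 + s = 0 := hs
    have : s * (s + 1) = 0 := by rw [← hs']; ring
    rcases mul_eq_zero.mp this with h0 | h0
    · left; exact Subtype.ext h0
    · right
      apply Subtype.ext
      show s = 1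
      have := addEqZeroIff.mp h0
      exact this
  -- card of range P
  have hcardP : Nat.card F = Nat.card (F ⧸ P.ker) * Nat.card P.ker :=
    AddSubgroup.card_eq_card_quotient_mul_card_addSubgroup P.ker
  have hrangeP : Nat.card (F ⧸ P.ker) = Nat.card P.range :=
    Nat.card_congr (QuotientAddGroup.quotientKerEquivRange P).toEquiv
  have hcardT : 2 * Nat.card T.ker = Nat.card F := by
    have h1 : Nat.card F = Nat.card (F ⧸ T.ker) * Nat.card T.ker :=
      AddSubgroup.card_eq_card_quotient_mul_card_addSubgroup T.ker
    have h2 : Nat.card (F ⧸ T.ker) = 2 := by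
      rw [Nat.card_congr (QuotientAddGroup.quotientKerEquivOfSurjective T hTsurj).toEquiv]
      simp [Nat.card_eq_fintype_card]
    rw [h1, h2]
  have hcards : Nat.card P.range = Nat.card T.ker := by
    rw [hrangeP, hkerP] at hcardP
    omega
  have hset : (P.range : Set F) = (T.ker : Set F) := by
    apply Set.eq_of_subset_of_ncard_le hrange
    rw [← Nat.card_coe_set_eq, ← Nat.card_coe_set_eq]
    have e1 : Nat.card (P.range : Set F) = Nat.card P.range := rfl
    have e2 : Nat.card (T.ker : Set F) = Nat.card T.ker := rfl
    rw [e1, e2, hcards]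
  have hmem : α ∈ (P.range : Set F) := by
    rw [hset]
    simpa [AddMonoidHom.mem_ker, hT] using hα
  obtain ⟨s, hs⟩ := hmem
  exact ⟨s, hs⟩

end Aux4


section Aux5
variable {h m : ℕ}
local notation "F" => GaloisField 2 h
local notation "V" => (Fin (2*m) → GaloisField 2 h)

noncomputable def dotp (h m : ℕ) (x y : Fin m → GaloisField 2 h) : GaloisField 2 h :=
  ∑ i, x i * y i

def splitE (h m : ℕ) :
    (Fin (2*m) → GaloisField 2 h) ≃ ((Fin m → GaloisField 2 h) × (Fin m → GaloisField 2 h)) where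
  toFun u := (fun i => u ⟨i.1, by omega⟩, fun i => u ⟨m + i.1, by omega⟩)
  invFun p := fun k => if hk : k.1 < m then p.1 ⟨k.1, hk⟩ else p.2 ⟨k.1 - m, by
    have := k.2; omega⟩
  left_inv u := by
    funext k
    by_cases hk : k.1 < m
    · simp only [dif_pos hk]
    · simp only [dif_neg hk]
      exact congrArg u (Fin.ext (show m + (k.1 - m) = k.1 by omega))
  right_inv p := by
    ext i
    · simp only
      rw [dif_pos i.2]
    · simp only
      rw [dif_neg (by omega : ¬ m + i.1 < m)]
      exact congrArg p.2 (Fin.ext (by simp))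

lemma th0_split (u : V) :
    th0 h m u = dotp h m ((splitE h m) u).1 ((splitE h m) u).2 := rfl

lemma dotp_add_right (x y y' : Fin m → F) :
    dotp h m x (y + y') = dotp h m x y + dotp h m x y' := by
  unfold dotp
  rw [← Finset.sum_add_distrib]
  exact Finset.sum_congr rfl (fun i _ => by simp only [Pi.add_apply]; ring)

lemma dotp_zero_right (x : Fin m → F) : dotp h m x 0 = 0 := by
  unfold dotp; simp

lemma dotp_single (x : Fin m → F) (i : Fin m) (d : F) :
    dotp h m x (Pi.single i d) = x i * d := by
  unfold dotp
  rw [Finset.sum_eq_single i]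
  · rw [Pi.single_eq_same]
  · intro j _ hj
    rw [Pi.single_eq_of_ne hj, mul_zero]
  · intro hmem; exact absurd (Finset.mem_univ _) hmem

lemma dot_count {x : Fin m → F} (hx : x ≠ 0) :
    2 * Nat.card {y : Fin m → GaloisField 2 h // tr h (dotp h m x y) = 0}
      = Nat.card (Fin m → GaloisField 2 h) := by
  set φ : (Fin m → GaloisField 2 h) →+ ZMod 2 :=
    AddMonoidHom.mk' (fun y => tr h (dotp h m x y))
      (fun y y' => by rw [dotp_add_right, tr_add]) with hφdef
  have hφsurj : Function.Surjective φ := by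
    have hx' : ∃ i, x i ≠ 0 := by
      by_contra hc
      push_neg at hc
      exact hx (funext fun i => hc i)
    obtain ⟨i, hi⟩ := hx'
    obtain ⟨c, hc⟩ := tr_surj (h := h) 1
    intro z
    rcases zmod2_cases z with rfl | rfl
    · exact ⟨0, by show tr h (dotp h m x 0) = 0; rw [dotp_zero_right]; unfold tr; simp⟩
    · refine ⟨Pi.single i ((x i)⁻¹ * c), ?_⟩
      show tr h (dotp h m x (Pi.single i ((x i)⁻¹ * c))) = 1
      rw [dotp_single, ← mul_assoc, mul_inv_cancel₀ hi, one_mul, hc]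
  exact half_card φ hφsurj

lemma card_fun_m (hh : h ≠ 0) : Nat.card (Fin m → GaloisField 2 h) = (2^h)^m := by
  haveI : Fintype (GaloisField 2 h) := Fintype.ofFinite _
  rw [Nat.card_eq_fintype_card, Fintype.card_fun]
  rw [← Nat.card_eq_fintype_card, GaloisField.card 2 h hh, Fintype.card_fin]

lemma C1 (hh : h ≠ 0) :
    2 * Nat.card {u : Fin (2*m) → GaloisField 2 h // tr h (th0 h m u) = 0}
      = (2^h)^(2*m) + (2^h)^m := by
  classical
  haveI : Fintype (GaloisField 2 h) := Fintype.ofFinite _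
  have e1 : {u : Fin (2*m) → GaloisField 2 h // tr h (th0 h m u) = 0} ≃
      {p : (Fin m → GaloisField 2 h) × (Fin m → GaloisField 2 h) //
        tr h (dotp h m p.1 p.2) = 0} :=
    (splitE h m).subtypeEquiv (fun u => by rw [th0_split])
  have e2 : {p : (Fin m → GaloisField 2 h) × (Fin m → GaloisField 2 h) //
        tr h (dotp h m p.1 p.2) = 0} ≃
      Σ x : Fin m → GaloisField 2 h, {y : Fin m → GaloisField 2 h // tr h (dotp h m x y) = 0} :=
    Equiv.subtypeProdEquivSigmaSubtype (fun x y => tr h (dotp h m x y) = 0)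
  rw [Nat.card_congr (e1.trans e2)]
  rw [Nat.card_eq_fintype_card, Fintype.card_sigma, Finset.mul_sum]
  set f : (Fin m → GaloisField 2 h) → ℕ :=
    fun x => 2 * Fintype.card {y : Fin m → GaloisField 2 h // tr h (dotp h m x y) = 0} with hf
  have hzero : f 0 = 2 * (2^h)^m := by
    simp only [hf]
    congr 1
    rw [← card_fun_m (m := m) hh, Nat.card_eq_fintype_card]
    apply Fintype.card_of_subtype
    intro y
    simp only [Finset.mem_univ, true_iff]
    have : dotp h m (0 : Fin m → GaloisField 2 h) y = 0 := by
      unfold dotp; simp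
    rw [this]
    unfold tr; simp
  have hrest : ∀ x ∈ Finset.univ.erase (0 : Fin m → GaloisField 2 h), f x = (2^h)^m := by
    intro x hxmem
    have hx : x ≠ 0 := (Finset.mem_erase.mp hxmem).1
    simp only [hf]
    rw [← card_fun_m (m := m) hh, ← Nat.card_eq_fintype_card]
    exact dot_count hx
  have hsplit : ∑ x, f x = f 0 + ∑ x ∈ Finset.univ.erase 0, f x :=
    (Finset.add_sum_erase Finset.univ f (Finset.mem_univ 0)).symm
  rw [hsplit, hzero, Finset.sum_congr rfl hrest, Finset.sum_const, smul_eq_mul]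
  have hcard_erase : (Finset.univ.erase (0 : Fin m → GaloisField 2 h)).card
      = (2^h)^m - 1 := by
    rw [Finset.card_erase_of_mem (Finset.mem_univ _), Finset.card_univ,
      ← Nat.card_eq_fintype_card, card_fun_m hh]
  rw [hcard_erase]
  have hP1 : 1 ≤ (2^h)^m := Nat.one_le_pow _ _ (Nat.pow_pos (by norm_num))
  have hQ : (2^h)^(2*m) = (2^h)^m * (2^h)^m := by
    rw [two_mul, pow_add]
  rw [hQ]
  rw [Nat.sub_mul ((2^h)^m) 1 ((2^h)^m)]
  have h1m : 1 * (2^h)^m = (2^h)^m := one_mul _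
  have hle : (2^h)^m ≤ (2^h)^m * (2^h)^m := Nat.le_mul_of_pos_right _ (by omega)
  omega
end Aux5

section Aux6
variable {h m : ℕ}
local notation "F" => GaloisField 2 h
local notation "V" => (Fin (2*m) → GaloisField 2 h)

lemma zmod2_ne_zero (x : ZMod 2) : ¬ x = 0 ↔ x = 1 := by revert x; decide

lemma zmod2_add_eq_zero (x y : ZMod 2) : x + y = 0 ↔ x = y := by revert x y; decide

lemma card_partition :
    Nat.card {u : Fin (2*m) → GaloisField 2 h // tr h (th0 h m u) = 0}
      + Nat.card {u : Fin (2*m) → GaloisField 2 h // tr h (th0 h m u) = 1}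
      = Nat.card (Fin (2*m) → GaloisField 2 h) := by
  classical
  have e0 : {u : Fin (2*m) → GaloisField 2 h // ¬ tr h (th0 h m u) = 0}
      ≃ {u : Fin (2*m) → GaloisField 2 h // tr h (th0 h m u) = 1} :=
    Equiv.subtypeEquiv (Equiv.refl _) (fun u => by simp [zmod2_ne_zero])
  rw [← Nat.card_congr e0, ← Nat.card_sum]
  exact Nat.card_congr (Equiv.sumCompl _)

lemma C2 (hh : h ≠ 0) :
    2 * Nat.card {u : Fin (2*m) → GaloisField 2 h // tr h (th0 h m u) = 1}
      = (2^h)^(2*m) - (2^h)^m := by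
  have h1 := C1 (m := m) hh
  have h2 := card_partition (h := h) (m := m)
  rw [card_fun_m (m := 2*m) hh] at h2
  omega

lemma tr_th_eq (b u : V) :
    tr h (th h m b u) = tr h (th0 h m (u + b)) + tr h (th0 h m b) := by
  unfold th
  rw [tr_add, tr_sq, th0_add, tr_add, tr_add]
  rw [symp_comm u b]
  have : ∀ x y z : ZMod 2, x + z = (x + y + z) + y := by decide
  exact this _ _ _

lemma card_th_level (b : Fin (2*m) → GaloisField 2 h) :
    Nat.card {u : Fin (2*m) → GaloisField 2 h // tr h (th h m b u) = 0}
      = Nat.card {u : Fin (2*m) → GaloisField 2 h // tr h (th0 h m u) = tr h (th0 h m b)} := by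
  apply Nat.card_congr
  have e1 : {u : Fin (2*m) → GaloisField 2 h // tr h (th h m b u) = 0}
      ≃ {u : Fin (2*m) → GaloisField 2 h // tr h (th0 h m (u + b)) = tr h (th0 h m b)} :=
    Equiv.subtypeEquiv (Equiv.refl _) (fun u => by
      rw [tr_th_eq, Equiv.refl_apply]
      exact zmod2_add_eq_zero _ _)
  have e2 : {u : Fin (2*m) → GaloisField 2 h // tr h (th0 h m (u + b)) = tr h (th0 h m b)}
      ≃ {v : Fin (2*m) → GaloisField 2 h // tr h (th0 h m v) = tr h (th0 h m b)} :=
    Equiv.subtypeEquiv (Equiv.addRight b) (fun u => Iff.rfl)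
  exact e1.trans e2

lemma beta_tr_zero (hh : h ≠ 0)
    {A : (Fin (2*m) → GaloisField 2 h) ≃ₗ[GaloisField 2 h] (Fin (2*m) → GaloisField 2 h)}
    (hA : IsSymp h m A) : tr h (th0 h m (beta h m A)) = 0 := by
  rcases zmod2_cases (tr h (th0 h m (beta h m A))) with h0 | h1
  · exact h0
  exfalso
  have hM : Nat.card {u : Fin (2*m) → GaloisField 2 h // tr h (th h m (beta h m A) u) = 0}
      = Nat.card {u : Fin (2*m) → GaloisField 2 h // tr h (th0 h m u) = 0} := by
    apply Nat.card_congr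
    exact Equiv.subtypeEquiv A.toEquiv.symm (fun u => by
      have := beta_spec hA u
      rw [← this]
      exact Iff.rfl)
  rw [card_th_level, h1] at hM
  have h1' := C1 (m := m) hh
  have h2' := C2 (m := m) hh
  have hP1 : 1 ≤ (2^h)^m := Nat.one_le_pow _ _ (by positivity)
  have hle : (2^h)^m ≤ (2^h)^(2*m) := Nat.pow_le_pow_right (by positivity) (by omega)
  omega

lemma sigma_tr_invariant (hh : h ≠ 0)
    {A : (Fin (2*m) → GaloisField 2 h) ≃ₗ[GaloisField 2 h] (Fin (2*m) → GaloisField 2 h)}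
    (hA : IsSymp h m A) (a : Fin (2*m) → GaloisField 2 h) :
    tr h (th0 h m (A a + beta h m A)) = tr h (th0 h m a) := by
  have e1 : tr h (th0 h m a)
      = tr h (th0 h m (A a)) + tr h (symp h m (beta h m A) (A a)) := by
    have hsp := beta_spec hA (A a)
    rw [A.symm_apply_apply] at hsp
    unfold th at hsp
    rw [hsp, tr_add, tr_sq]
  rw [th0_add, tr_add, tr_add, beta_tr_zero hh hA, add_zero,
    symp_comm (A a) (beta h m A), ← e1]

end Aux6

section Aux7
variable {h m : ℕ}
local notation "F" => GaloisField 2 h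
local notation "V" => (Fin (2*m) → GaloisField 2 h)

lemma vadd_self (v : V) : v + v = 0 := by
  funext j; exact CharTwo.add_self_eq_zero _

noncomputable def tvl (h m : ℕ) (b : Fin (2*m) → GaloisField 2 h) (t : GaloisField 2 h) :
    (Fin (2*m) → GaloisField 2 h) →ₗ[GaloisField 2 h] (Fin (2*m) → GaloisField 2 h) where
  toFun u := u + (t * symp h m b u) • b
  map_add' u v := by
    rw [symp_add_right, mul_add, add_smul]
    abel
  map_smul' c u := by
    simp only [RingHom.id_apply]
    rw [symp_smul_right, smul_add, smul_smul]
    congr 1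
    rw [mul_left_comm]

lemma tvl_apply (b : V) (t : F) (u : V) :
    tvl h m b t u = u + (t * symp h m b u) • b := rfl

lemma symp_tvl (b : V) (t : F) (u : V) :
    symp h m b (tvl h m b t u) = symp h m b u := by
  rw [tvl_apply, symp_add_right, symp_smul_right, symp_self, mul_zero, add_zero]

lemma tvl_invol (b : V) (t : F) : ∀ u, tvl h m b t (tvl h m b t u) = u := by
  intro u
  rw [tvl_apply (u := tvl h m b t u), symp_tvl, tvl_apply, add_assoc, vadd_self, add_zero]

noncomputable def tve (h m : ℕ) (b : Fin (2*m) → GaloisField 2 h) (t : GaloisField 2 h) :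
    (Fin (2*m) → GaloisField 2 h) ≃ₗ[GaloisField 2 h] (Fin (2*m) → GaloisField 2 h) :=
  { tvl h m b t with
    invFun := tvl h m b t
    left_inv := tvl_invol b t
    right_inv := tvl_invol b t }

lemma tve_apply (b : V) (t : F) (u : V) :
    tve h m b t u = u + (t * symp h m b u) • b := rfl

lemma tve_symm_apply (b : V) (t : F) (u : V) :
    (tve h m b t).symm u = u + (t * symp h m b u) • b := rfl

lemma isSymp_tve (b : V) (t : F) : IsSymp h m (tve h m b t) := by
  intro u v
  rw [tve_apply, tve_apply, symp_add_left, symp_add_right u, symp_smul_right,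
    symp_smul_left, symp_add_right b, symp_smul_right, symp_self, symp_comm u b]
  linear_combination CharTwo.add_self_eq_zero (t * symp h m b u * symp h m b v)

lemma th0_tve (b : V) (t : F) (u : V) :
    th0 h m (tve h m b t u)
      = th0 h m u + (t^2 * th0 h m b + t) * (symp h m b u)^2 := by
  rw [tve_apply, th0_add, th0_smul, symp_smul_right, symp_comm u b]
  ring

lemma beta_tve (b : V) (t : F) {c : F} (hc : c^2 = t^2 * th0 h m b + t) :
    beta h m (tve h m b t) = c • b := by
  symm
  apply beta_unique (isSymp_tve b t)
  intro u
  have hsymm : (tve h m b t).symm u = tve h m b t u := rfl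
  rw [hsymm, th0_tve]
  unfold th
  rw [symp_smul_left, mul_pow, hc]

lemma trans_orbit (a a' : Fin (2*m) → GaloisField 2 h)
    (htr : tr h (th0 h m a) = tr h (th0 h m a')) :
    ∃ A, IsSymp h m A ∧ A a + beta h m A = a' := by
  classical
  set b := a + a' with hb
  set α := th0 h m b + (symp h m b a)^2 with hα
  have htrα : tr h α = 0 := by
    have e : α = th0 h m a + th0 h m a' + symp h m a a' + (symp h m a a')^2 := by
      rw [hα, hb, th0_add, symp_add_left, symp_self, zero_add, symp_comm a' a]
    rw [e, tr_add, tr_add, tr_add, tr_sq, htr]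
    have : ∀ x y : ZMod 2, ((x + x) + y) + y = 0 := by decide
    exact this _ _
  obtain ⟨t, ht⟩ : ∃ t : F, α * t^2 + t + 1 = 0 := by
    rcases eq_or_ne α 0 with h0 | h0
    · refine ⟨1, ?_⟩
      rw [h0]
      calc (0:F) * 1^2 + 1 + 1 = 1 + 1 := by ring
      _ = 0 := CharTwo.add_self_eq_zero 1
    · obtain ⟨s, hs⟩ := artin_schreier htrα
      refine ⟨s * α⁻¹, ?_⟩
      have hαinv : α * α⁻¹ = 1 := mul_inv_cancel₀ h0
      have key : α * (s*α⁻¹)^2 + s*α⁻¹ + 1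
          = (s^2 + s) * α⁻¹ * (α * α⁻¹) + s*α⁻¹*(1 - α*α⁻¹) + 1 := by ring
      rw [key, hαinv, hs, mul_one, sub_self, mul_zero, add_zero, hαinv]
      exact CharTwo.add_self_eq_zero 1
  obtain ⟨c, hc⟩ := exists_sqrt (t^2 * th0 h m b + t)
  refine ⟨tve h m b t, isSymp_tve b t, ?_⟩
  rw [beta_tve b t hc, tve_apply]
  have hcoef : t * symp h m b a + c = 1 := by
    apply sq_inj
    rw [CharTwo.add_sq, mul_pow, hc, one_pow]
    have ht' := ht
    rw [hα] at ht'
    linear_combination ht' - CharTwo.two_eq_zero (R := GaloisField 2 h)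
  rw [add_assoc, ← add_smul, hcoef, one_smul, hb, ← add_assoc, vadd_self, zero_add]

end Aux7


/-- For every symplectic `A` there is a unique `b_A` with `ϑ_0 ∘ A⁻¹ = ϑ_{b_A}`, and then
`ϑ_a ∘ A⁻¹ = ϑ_{Aa + b_A}`; the map `A ↦ (a ↦ Aa + b_A)` is an injective group
homomorphism from the symplectic group into the permutations of `V`, meeting the
translations only in the identity, and its image has exactly the two orbits
`{Tr(ϑ_0(a)) = 0}` and `{Tr(ϑ_0(a)) = 1}`, of sizes `(q^{2m}+q^m)/2` and `(q^{2m}-q^m)/2`. -/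
theorem stmt_4 (h m : ℕ) (hh : 1 ≤ h) (hm : 1 ≤ m) :
    (∀ A : (Fin (2*m) → GaloisField 2 h) ≃ₗ[GaloisField 2 h] (Fin (2*m) → GaloisField 2 h),
      IsSymp h m A →
      ∃! b : Fin (2*m) → GaloisField 2 h, ∀ u, th0 h m (A.symm u) = th h m b u)
    ∧ ∃ β : ((Fin (2*m) → GaloisField 2 h) ≃ₗ[GaloisField 2 h] (Fin (2*m) → GaloisField 2 h))
        → (Fin (2*m) → GaloisField 2 h),
      -- `β A` is the vector `b_A`
      (∀ A, IsSymp h m A → ∀ u, th0 h m (A.symm u) = th h m (β A) u)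
      -- and then `ϑ_a(A⁻¹ u) = ϑ_{Aa + b_A}(u)`
      ∧ (∀ A, IsSymp h m A → ∀ a u, th h m a (A.symm u) = th h m (A a + β A) u)
      -- `σ_A : a ↦ Aa + b_A` is a permutation of `V`
      ∧ (∀ A, IsSymp h m A → Function.Bijective (fun a => A a + β A))
      -- `A ↦ σ_A` is multiplicative on symplectic maps
      ∧ (∀ A B, IsSymp h m A → IsSymp h m B →
          ∀ a, (A * B) a + β (A * B) = A (B a + β B) + β A)
      -- and injective
      ∧ (∀ A B, IsSymp h m A → IsSymp h m B →
          (∀ a, A a + β A = B a + β B) → A = B)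
      -- the image meets the translations only in the identity permutation
      ∧ (∀ A, IsSymp h m A → (∃ c, ∀ a, A a + β A = a + c) → ∀ a, A a + β A = a)
      -- the two trace-level sets are invariant under every `σ_A`
      ∧ (∀ A, IsSymp h m A → ∀ a, tr h (th0 h m (A a + β A)) = tr h (th0 h m a))
      -- and the image acts transitively on each of them
      ∧ (∀ a a' : Fin (2*m) → GaloisField 2 h, tr h (th0 h m a) = tr h (th0 h m a') →
          ∃ A, IsSymp h m A ∧ A a + β A = a')
      -- orbit sizes
      ∧ 2 * Nat.card {a : Fin (2*m) → GaloisField 2 h // tr h (th0 h m a) = 0}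
          = (2^h)^(2*m) + (2^h)^m
      ∧ 2 * Nat.card {a : Fin (2*m) → GaloisField 2 h // tr h (th0 h m a) = 1}
          = (2^h)^(2*m) - (2^h)^m := by
  have hh' : h ≠ 0 := by omega
  constructor
  · intro A hA
    exact exists_unique_beta A hA
  refine ⟨beta h m, ?_, ?_, ?_, ?_, ?_, ?_, ?_, ?_, ?_, ?_⟩
  · intro A hA
    exact beta_spec hA
  · intro A hA a u
    exact th_shift hA a u
  · intro A hA
    constructor
    · intro x y hxy
      simp only at hxy
      exact A.injective (add_right_cancel hxy)
    · intro u
      refine ⟨A.symm (u + beta h m A), ?_⟩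
      simp only
      rw [A.apply_symm_apply, add_assoc, vadd_self, add_zero]
  · intro A B hA hB a
    rw [beta_mul hA hB, map_add, add_assoc]
    have h1 : (A * B) a = A (B a) := rfl
    rw [h1]
  · intro A B hA hB hfun
    have hβ : beta h m A = beta h m B := by
      have := hfun 0
      rwa [map_zero, map_zero, zero_add, zero_add] at this
    apply LinearEquiv.ext
    intro a
    have := hfun a
    rw [hβ] at this
    exact add_right_cancel this
  · rintro A hA ⟨c, hc⟩ a
    have hβc : beta h m A = c := by
      have := hc 0
      rwa [map_zero, zero_add, zero_add] at this
    have hAa : ∀ x, A x = x := by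
      intro x
      have := hc x
      rw [hβc] at this
      exact add_right_cancel this
    have hβ0 : beta h m A = 0 := by
      apply symp_nondeg
      intro u
      have hsp := beta_spec hA u
      have hsymm : A.symm u = u := by
        have := hAa (A.symm u)
        rw [A.apply_symm_apply] at this
        exact this.symm
      unfold th at hsp
      rw [hsymm] at hsp
      have h2 := left_eq_add.mp hsp
      exact pow_eq_zero_iff (by norm_num : (2:ℕ) ≠ 0) |>.mp h2
    rw [hβ0, add_zero, hAa]
  · intro A hA a
    exact sigma_tr_invariant hh' hA a
  · intro a a' htra
    exact trans_orbit a a' htra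
  · exact C1 hh'
  · exact C2 hh'
end

section
/- Let d ∈ V and set ε = +1 if Tr(ϑ_0(d)) = 0 and ε = −1 if Tr(ϑ_0(d)) = 1. Then the number of vectors x ∈ V with Tr(ϑ_d(x)) = 0 equals (q^{2m} + ε·q^m)/2 = 2^{2hm−1} + ε·2^{hm−1}. (That is, the F_2-valued quadratic form Tr∘ϑ_d on V, viewed as an F_2-vector space of dimension 2hm, is non-degenerate of the same type as ϑ_d.) -/
open Finset

/- ### Auxiliary definitions and lemmas -/

noncomputable section

/-- The dot product on `F^m`. -/
def dotAux (h m : ℕ) (u v : Fin m → GaloisField 2 h) : GaloisField 2 h :=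
  ∑ i, u i * v i

/-- Splitting `F^{2m} ≃ F^m × F^m`. -/
def splitEquivAux (h m : ℕ) :
    (Fin (2*m) → GaloisField 2 h) ≃ (Fin m → GaloisField 2 h) × (Fin m → GaloisField 2 h) where
  toFun y := (fun i => y ⟨i.1, by omega⟩, fun i => y ⟨m + i.1, by omega⟩)
  invFun p := fun j => if hj : j.1 < m then p.1 ⟨j.1, hj⟩ else p.2 ⟨j.1 - m, by omega⟩
  left_inv y := by
    funext j
    by_cases hj : j.1 < m
    · simp only [dif_pos hj]
    · simp only [dif_neg hj]
      congr 1
      exact Fin.ext (show m + (j.1 - m) = j.1 by omega)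
  right_inv p := by
    ext i
    · simp
    · simp only
      rw [dif_neg (by omega)]
      have hidx : (⟨m + i.1 - m, by omega⟩ : Fin m) = i :=
        Fin.ext (show m + i.1 - m = i.1 by omega)
      rw [hidx]

end

lemma tr_sq_aux (h : ℕ) (x : GaloisField 2 h) : tr h (x^2) = tr h x := by
  have hbij : Function.Bijective (frobenius (GaloisField 2 h) 2) :=
    Finite.injective_iff_bijective.mp (frobenius (GaloisField 2 h) 2).injective
  let e : GaloisField 2 h ≃ₐ[ZMod 2] GaloisField 2 h :=
    AlgEquiv.ofBijective
      { toRingHom := frobenius (GaloisField 2 h) 2,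
        commutes' := fun r => by
          show frobenius (GaloisField 2 h) 2 (algebraMap (ZMod 2) _ r) = algebraMap _ _ r
          rw [frobenius_def, ← map_pow]
          congr 1
          revert r; decide } hbij
  have := Algebra.trace_eq_of_algEquiv e x
  simpa [e, tr, AlgEquiv.ofBijective, frobenius_def] using this

lemma exists_tr_one_aux (h : ℕ) : ∃ t : GaloisField 2 h, tr h t = 1 := by
  have hne := Algebra.trace_ne_zero (ZMod 2) (GaloisField 2 h)
  obtain ⟨t, ht⟩ : ∃ t, Algebra.trace (ZMod 2) (GaloisField 2 h) t ≠ 0 := by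
    by_contra hc
    push_neg at hc
    exact hne (LinearMap.ext hc)
  refine ⟨t, ?_⟩
  have hz : ∀ a : ZMod 2, a ≠ 0 → a = 1 := by decide
  exact hz _ ht

lemma fiber_card_aux (h m : ℕ) (hh : 1 ≤ h) (hm : 1 ≤ m)
    [Fintype (GaloisField 2 h)]
    {u : Fin m → GaloisField 2 h} (hu : u ≠ 0) (c : ZMod 2) :
    (univ.filter fun v : Fin m → GaloisField 2 h => tr h (dotAux h m u v) = c).card
      = 2^(h*m - 1) := by
  classical
  obtain ⟨t, ht⟩ := exists_tr_one_aux h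
  obtain ⟨i, hi⟩ := Function.ne_iff.mp hu
  set v₁ : Fin m → GaloisField 2 h := fun j => if j = i then (u i)⁻¹ * t else 0 with hv₁
  have hd1 : dotAux h m u v₁ = t := by
    rw [dotAux, Finset.sum_eq_single i]
    · have hv : v₁ i = (u i)⁻¹ * t := by simp [hv₁]
      rw [hv, ← mul_assoc, mul_inv_cancel₀ (by simpa using hi), one_mul]
    · intro j _ hj; simp [hv₁, hj]
    · simp
  have hdadd : ∀ v w : Fin m → GaloisField 2 h,
      dotAux h m u (v + w) = dotAux h m u v + dotAux h m u w := by
    intro v w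
    simp [dotAux, mul_add, Finset.sum_add_distrib]
  have htr_add : ∀ x y : GaloisField 2 h, tr h (x + y) = tr h x + tr h y := by
    intro x y; simp [tr, map_add]
  have hvv : v₁ + v₁ = 0 := by
    funext j; exact CharTwo.add_self_eq_zero _
  have hswap : ∀ c' : ZMod 2,
      (univ.filter fun v : Fin m → GaloisField 2 h => tr h (dotAux h m u v) = c').card
      = (univ.filter fun v : Fin m → GaloisField 2 h => tr h (dotAux h m u v) = c' + 1).card := by
    intro c'
    apply Finset.card_bij (fun v _ => v + v₁)
    · intro v hv
      simp only [mem_filter, mem_univ, true_and] at hv ⊢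
      rw [hdadd, htr_add, hd1, ht, hv]
    · intro a _ b _ hab
      have := congrArg (· + v₁) hab
      simpa [add_assoc, hvv] using this
    · intro w hw
      refine ⟨w + v₁, ?_, ?_⟩
      · simp only [mem_filter, mem_univ, true_and] at hw ⊢
        rw [hdadd, htr_add, hd1, ht, hw]
        have : ∀ a : ZMod 2, a + 1 + 1 = a := by decide
        exact this c'
      · rw [add_assoc, hvv, add_zero]
  have hcardF : Fintype.card (GaloisField 2 h) = 2^h := by
    rw [← Nat.card_eq_fintype_card, GaloisField.card 2 h (by omega)]
  have hcardW : Fintype.card (Fin m → GaloisField 2 h) = 2^(h*m) := by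
    rw [Fintype.card_fun, hcardF, Fintype.card_fin, ← pow_mul]
  have htot :
      (univ.filter fun v : Fin m → GaloisField 2 h => tr h (dotAux h m u v) = 0).card
      + (univ.filter fun v : Fin m → GaloisField 2 h => tr h (dotAux h m u v) = 1).card
      = 2^(h*m) := by
    rw [show (univ.filter fun v : Fin m → GaloisField 2 h => tr h (dotAux h m u v) = 1)
        = (univ.filter fun v : Fin m → GaloisField 2 h => ¬ tr h (dotAux h m u v) = 0) from ?_]
    · rw [Finset.card_filter_add_card_filter_not, ← hcardW, Finset.card_univ]
    · apply Finset.filter_congr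
      intro v _
      have : ∀ a : ZMod 2, (a = 1) ↔ ¬ a = 0 := by decide
      simp only [this]
  have h01 := hswap 0
  simp only [zero_add] at h01
  have hpow : 2^(h*m) = 2 * 2^(h*m - 1) := by
    rw [← pow_succ']
    congr 1
    have : 1 ≤ h * m := Nat.one_le_iff_ne_zero.mpr (by positivity)
    omega
  have hc : c = 0 ∨ c = 1 := by
    fin_cases c
    · exact Or.inl rfl
    · exact Or.inr rfl
  rcases hc with rfl | rfl
  · omega
  · omega

lemma th0_eq_dot_aux (h m : ℕ) (y : Fin (2*m) → GaloisField 2 h) :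
    th0 h m y = dotAux h m ((splitEquivAux h m) y).1 ((splitEquivAux h m) y).2 := rfl

lemma count_th0_aux (h m : ℕ) (hh : 1 ≤ h) (hm : 1 ≤ m) (c : ZMod 2) :
    Nat.card {y : Fin (2*m) → GaloisField 2 h // tr h (th0 h m y) = c}
      = (if c = 0 then 2^(h*m) else 0) + (2^(h*m) - 1) * 2^(h*m - 1) := by
  classical
  letI : Fintype (GaloisField 2 h) := Fintype.ofFinite _
  have e1 : Nat.card {y : Fin (2*m) → GaloisField 2 h // tr h (th0 h m y) = c}
      = Nat.card {p : (Fin m → GaloisField 2 h) × (Fin m → GaloisField 2 h) //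
          tr h (dotAux h m p.1 p.2) = c} := by
    apply Nat.card_congr
    exact (splitEquivAux h m).subtypeEquiv (fun y => by rw [th0_eq_dot_aux])
  rw [e1, Nat.card_eq_fintype_card, Fintype.card_subtype]
  rw [Finset.card_filter, Fintype.sum_prod_type]
  have key : ∀ u : Fin m → GaloisField 2 h,
      (∑ v : Fin m → GaloisField 2 h, if tr h (dotAux h m u v) = c then 1 else 0)
      = (univ.filter fun v : Fin m → GaloisField 2 h => tr h (dotAux h m u v) = c).card := by
    intro u
    rw [Finset.card_filter]
  simp only [key]
  rw [← Finset.sum_filter_add_sum_filter_not univ (fun u : Fin m → GaloisField 2 h => u = 0)]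
  have hfil : (univ.filter fun u : Fin m → GaloisField 2 h => u = 0) = {0} := by
    rw [Finset.filter_eq']
    simp
  have hcardF : Fintype.card (GaloisField 2 h) = 2^h := by
    rw [← Nat.card_eq_fintype_card, GaloisField.card 2 h (by omega)]
  have hcardW : Fintype.card (Fin m → GaloisField 2 h) = 2^(h*m) := by
    rw [Fintype.card_fun, hcardF, Fintype.card_fin, ← pow_mul]
  have hzero : (univ.filter fun v : Fin m → GaloisField 2 h =>
      tr h (dotAux h m (0 : Fin m → GaloisField 2 h) v) = c).card
      = if c = 0 then 2^(h*m) else 0 := by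
    have hd0 : ∀ v : Fin m → GaloisField 2 h, dotAux h m 0 v = 0 := by
      intro v; simp [dotAux]
    simp only [hd0]
    have htr0 : tr h (0 : GaloisField 2 h) = 0 := by simp [tr]
    rw [htr0]
    by_cases hc : c = 0
    · subst hc
      simp [Finset.filter_true_of_mem, ← hcardW, Finset.card_univ]
    · rw [if_neg hc]
      rw [Finset.filter_false_of_mem, Finset.card_empty]
      intro v _
      exact fun hh' => hc hh'.symm
  rw [hfil, Finset.sum_singleton, hzero]
  have hrest : ∑ u ∈ univ.filter (fun u : Fin m → GaloisField 2 h => ¬ u = 0),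
      (univ.filter fun v : Fin m → GaloisField 2 h => tr h (dotAux h m u v) = c).card
      = (2^(h*m) - 1) * 2^(h*m - 1) := by
    rw [Finset.sum_congr rfl (fun u hu => fiber_card_aux h m hh hm (by
      simpa using (Finset.mem_filter.mp hu).2) c)]
    rw [Finset.sum_const, smul_eq_mul]
    congr 1
    rw [Finset.filter_not, Finset.filter_eq', if_pos (Finset.mem_univ _)]
    rw [Finset.card_sdiff_of_subset (by simp)]
    simp [← hcardW, Finset.card_univ]
  rw [hrest]

lemma th0_add_aux (h m : ℕ) (x d : Fin (2*m) → GaloisField 2 h) :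
    th0 h m (x + d) = th0 h m x + th0 h m d + symp h m d x := by
  rw [th0, th0, th0, symp, ← Finset.sum_add_distrib, ← Finset.sum_add_distrib]
  apply Finset.sum_congr rfl
  intro i _
  simp only [Pi.add_apply]
  ring

lemma tr_shift_aux (h m : ℕ) (d x : Fin (2*m) → GaloisField 2 h) :
    tr h (th0 h m (x + d)) = tr h (th h m d x) + tr h (th0 h m d) := by
  rw [th0_add_aux, th]
  simp only [tr, map_add]
  rw [show Algebra.trace (ZMod 2) (GaloisField 2 h) (symp h m d x ^ 2)
      = Algebra.trace (ZMod 2) (GaloisField 2 h) (symp h m d x) from tr_sq_aux h _]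
  abel

/-- The number of `x` with `Tr(ϑ_d(x)) = 0` equals `(q^{2m} + ε q^m)/2 = 2^{2hm-1} + ε 2^{hm-1}`,
where `ε = ±1` is the type of `ϑ_d`. -/
theorem stmt_11 (h m : ℕ) (hh : 1 ≤ h) (hm : 1 ≤ m)
    (d : Fin (2*m) → GaloisField 2 h) :
    let q : ℤ := 2^h
    let ε : ℤ := if tr h (th0 h m d) = 0 then 1 else -1
    2 * (Nat.card {x : Fin (2*m) → GaloisField 2 h // tr h (th h m d x) = 0} : ℤ)
        = q^(2*m) + ε * q^m
    ∧ (Nat.card {x : Fin (2*m) → GaloisField 2 h // tr h (th h m d x) = 0} : ℤ)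
        = 2^(2*h*m - 1) + ε * 2^(h*m - 1) := by
  intro q ε
  have hshift : Nat.card {x : Fin (2*m) → GaloisField 2 h // tr h (th h m d x) = 0}
      = Nat.card {y : Fin (2*m) → GaloisField 2 h // tr h (th0 h m y) = tr h (th0 h m d)} := by
    apply Nat.card_congr
    refine (Equiv.addRight d).subtypeEquiv (fun x => ?_)
    show tr h (th h m d x) = 0 ↔ tr h (th0 h m (x + d)) = tr h (th0 h m d)
    rw [tr_shift_aux]
    exact add_eq_right.symm
  rw [hshift, count_th0_aux h m hh hm]
  set K := h * m with hK
  have hK1 : 1 ≤ K := by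
    calc 1 = 1 * 1 := by ring
    _ ≤ h * m := Nat.mul_le_mul hh hm
  have h2K : 2*h*m = K + K := by rw [hK]; ring
  have h2K' : h*(2*m) = K + K := by rw [hK]; ring
  set a : ℤ := 2^(K-1) with ha
  have l1 : (2:ℤ)^K = 2*a := by
    rw [ha, ← pow_succ']
    congr 1
    omega
  have l2 : (q:ℤ)^m = 2^K := by
    rw [hK, pow_mul]
  have l3 : (q:ℤ)^(2*m) = (2*a)^2 := by
    show ((2:ℤ)^h)^(2*m) = (2*a)^2
    rw [← pow_mul, h2K', pow_add, l1]
    ring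
  have l5 : (2:ℤ)^(2*h*m - 1) = 2*a^2 := by
    rw [show 2*h*m - 1 = (K-1) + ((K-1) + 1) from by omega, pow_add, pow_succ, ha]
    ring
  by_cases hc : tr h (th0 h m d) = 0
  · rw [if_pos hc]
    have hε : ε = 1 := by simp only [ε]; rw [if_pos hc]
    have hcastN : ((2^K + (2^K - 1) * 2^(K-1) : ℕ) : ℤ) = 2^K + (2^K - 1) * 2^(K-1) := by
      push_cast [Nat.one_le_two_pow]
      ring
    rw [hcastN, hε, l2, l3, l5, l1, ← ha]
    constructor <;> ring
  · rw [if_neg hc]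
    have hε : ε = -1 := by simp only [ε]; rw [if_neg hc]
    have hcastN : ((0 + (2^K - 1) * 2^(K-1) : ℕ) : ℤ) = (2^K - 1) * 2^(K-1) := by
      push_cast [Nat.one_le_two_pow]
      ring
    rw [hcastN, hε, l2, l3, l5, l1, ← ha]
    constructor <;> ring
end
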